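/- For a rooted tree T, the following are equivalent: (a) R(T) is scattered; (b) R(T) does not contain a topological copy of the Cantor space 2^ω; (c) T contains no subset order-isomorphic to the binary tree 2^{<ω}. -/

import Mathlib

open Set Topology

/-- An order-theoretic tree: every set of predecessors is a well-ordered chain. -/
def IsOrderTree (T : Type*) [PartialOrder T] : Prop :=
  ∀ t : T, (Set.Iio t).IsWF ∧ IsChain (· ≤ ·) (Set.Iio t)

/-- A ray: a nonempty, downward closed chain with no maximal element. -/
def IsRay {T : Type*} [PartialOrder T] (R : Set T) : Prop :=
  R.Nonempty ∧ IsChain (· ≤ ·) R ∧ (∀ x ∈ R, ∀ y, y ≤ x → y ∈ R) ∧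
    ∀ x ∈ R, ∃ y ∈ R, x < y

/-- The ray space of a tree. -/
def RaySpace (T : Type*) [PartialOrder T] := {R : Set T // IsRay R}

/-- The topology on the ray space, inherited from the product topology on `2^T`:
subbasic open sets are `[t] = {R : t ∈ R}` and their complements. -/
instance {T : Type*} [PartialOrder T] : TopologicalSpace (RaySpace T) :=
  TopologicalSpace.generateFrom
    {U | ∃ t : T, U = {R : RaySpace T | t ∈ R.val} ∨ U = {R : RaySpace T | t ∉ R.val}}

section Helpers
variable {T : Type*} [PartialOrder T]

lemma isOpen_memSet (t : T) : IsOpen {R : RaySpace T | t ∈ R.val} :=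
  TopologicalSpace.GenerateOpen.basic _ ⟨t, Or.inl rfl⟩

lemma isOpen_notMemSet (t : T) : IsOpen {R : RaySpace T | t ∉ R.val} :=
  TopologicalSpace.GenerateOpen.basic _ ⟨t, Or.inr rfl⟩

lemma ray_comp (R : RaySpace T) {u v : T} (hu : u ∈ R.val) (hv : v ∈ R.val) :
    u ≤ v ∨ v ≤ u := by
  rcases eq_or_ne u v with rfl | hne
  · exact Or.inl le_rfl
  · exact R.2.2.1 hu hv hne

lemma rayspace_t2 : T2Space (RaySpace T) := by
  refine ⟨fun R R' hne => ?_⟩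
  have hvne : R.val ≠ R'.val := fun h => hne (Subtype.ext h)
  have : ∃ t, ¬ (t ∈ R.val ↔ t ∈ R'.val) := by
    by_contra h
    push_neg at h
    exact hvne (Set.ext h)
  obtain ⟨t, ht⟩ := this
  by_cases htR : t ∈ R.val
  · have htR' : t ∉ R'.val := fun h => ht ⟨fun _ => h, fun _ => htR⟩
    exact ⟨{x | t ∈ x.val}, {x | t ∉ x.val}, isOpen_memSet t, isOpen_notMemSet t,
      htR, htR', Set.disjoint_left.mpr fun x hx hx' => hx' hx⟩
  · have htR' : t ∈ R'.val := by
      by_contra h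
      exact ht ⟨fun h' => absurd h' htR, fun h' => absurd h' h⟩
    exact ⟨{x | t ∉ x.val}, {x | t ∈ x.val}, isOpen_notMemSet t, isOpen_memSet t,
      htR, htR', Set.disjoint_left.mpr fun x hx hx' => hx hx'⟩

end Helpers

section CantorEmbed
variable {T : Type*} [PartialOrder T]

/-- The first `n` values of `x` as a list. -/
def seg (x : ℕ → Bool) (n : ℕ) : List Bool := (List.range n).map x

lemma seg_length (x : ℕ → Bool) (n : ℕ) : (seg x n).length = n := by simp [seg]

lemma seg_prefix (x : ℕ → Bool) {n m : ℕ} (h : n ≤ m) : seg x n <+: seg x m := by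
  have : seg x n = (seg x m).take n := by
    simp [seg, ← List.map_take, List.take_range, Nat.min_eq_left h]
  rw [this]
  exact List.take_prefix _ _

lemma seg_congr {x y : ℕ → Bool} {n : ℕ} (h : ∀ i < n, x i = y i) : seg x n = seg y n :=
  List.map_congr_left fun a ha => h a (List.mem_range.mp ha)

lemma seg_get (x : ℕ → Bool) (n : ℕ) : (seg x (n+1))[n]? = some (x n) := by
  simp [seg]

variable (φ : List Bool → T) (hφ : ∀ s t : List Bool, s <+: t ↔ φ s ≤ φ t)

lemma open_cray_mem (t : T) : IsOpen {x : ℕ → Bool | ∃ n, t ≤ φ (seg x n)} := by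
  rw [isOpen_iff_mem_nhds]
  rintro x ⟨n, hn⟩
  have hopen : IsOpen {y : ℕ → Bool | ∀ i : Fin n, y i = x i} := by
    have : {y : ℕ → Bool | ∀ i : Fin n, y i = x i} =
        ⋂ i : Fin n, (fun y : ℕ → Bool => y i) ⁻¹' {x i} := by
      ext y; simp [Set.mem_iInter]
    rw [this]
    exact isOpen_iInter_of_finite fun i =>
      (continuous_apply (i : ℕ)).isOpen_preimage _ (isOpen_discrete _)
  refine Filter.mem_of_superset (hopen.mem_nhds fun i => rfl) ?_
  intro y hy
  have : seg y n = seg x n := seg_congr fun i hi => hy ⟨i, hi⟩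
  exact ⟨n, this ▸ hn⟩

include hφ

lemma phi_seg_mono (x : ℕ → Bool) {n m : ℕ} (h : n ≤ m) : φ (seg x n) ≤ φ (seg x m) :=
  (hφ _ _).mp (seg_prefix x h)

lemma phi_seg_strict (x : ℕ → Bool) {n m : ℕ} (h : n < m) : φ (seg x n) < φ (seg x m) := by
  refine lt_of_le_of_ne (phi_seg_mono φ hφ x h.le) fun he => ?_
  have := ((hφ (seg x m) (seg x n)).mpr he.ge).length_le
  simp [seg_length] at this
  omega

lemma isRay_cray (htree : IsOrderTree T) (x : ℕ → Bool) :
    IsRay {u : T | ∃ n, u ≤ φ (seg x n)} := by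
  refine ⟨⟨φ (seg x 0), 0, le_rfl⟩, ?_, ?_, ?_⟩
  · rintro u ⟨n, hn⟩ v ⟨m, hm⟩ hne
    rcases le_total n m with h | h
    · have hu : u < φ (seg x (m+1)) :=
        lt_of_le_of_lt (hn.trans (phi_seg_mono φ hφ x h)) (phi_seg_strict φ hφ x m.lt_succ_self)
      have hv : v < φ (seg x (m+1)) :=
        lt_of_le_of_lt hm (phi_seg_strict φ hφ x m.lt_succ_self)
      exact (htree (φ (seg x (m+1)))).2 hu hv hne
    · have hu : u < φ (seg x (n+1)) :=
        lt_of_le_of_lt hn (phi_seg_strict φ hφ x n.lt_succ_self)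
      have hv : v < φ (seg x (n+1)) :=
        lt_of_le_of_lt (hm.trans (phi_seg_mono φ hφ x h)) (phi_seg_strict φ hφ x n.lt_succ_self)
      exact (htree (φ (seg x (n+1)))).2 hu hv hne
  · rintro u ⟨n, hn⟩ v hv
    exact ⟨n, hv.trans hn⟩
  · rintro u ⟨n, hn⟩
    exact ⟨φ (seg x (n+1)), ⟨n+1, le_rfl⟩,
      lt_of_le_of_lt hn (phi_seg_strict φ hφ x n.lt_succ_self)⟩

lemma cray_inj {x y : ℕ → Bool} (hxy : x ≠ y) :
    {u : T | ∃ n, u ≤ φ (seg x n)} ≠ {u : T | ∃ n, u ≤ φ (seg y n)} := by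
  have hex : ∃ n, x n ≠ y n := by
    by_contra h; push_neg at h; exact hxy (funext h)
  set n := Nat.find hex with hn
  have hspec : x n ≠ y n := Nat.find_spec hex
  have hmin : ∀ i < n, x i = y i := fun i hi => not_ne_iff.mp (Nat.find_min hex hi)
  intro heq
  have h1 : φ (seg x (n+1)) ∈ {u : T | ∃ n, u ≤ φ (seg x n)} := ⟨n+1, le_rfl⟩
  rw [heq] at h1
  obtain ⟨m, hm⟩ := h1
  have hpre : seg x (n+1) <+: seg y m := (hφ _ _).mpr hm
  have hlen : n+1 ≤ m := by
    have := hpre.length_le; simpa [seg_length] using this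
  have hpre2 : seg x (n+1) <+: seg y (n+1) :=
    List.prefix_of_prefix_length_le hpre (seg_prefix y hlen) (by simp [seg_length])
  have heq2 : seg x (n+1) = seg y (n+1) := hpre2.eq_of_length (by simp [seg_length])
  have : some (x n) = some (y n) := by
    rw [← seg_get x n, ← seg_get y n, heq2]
  exact hspec (Option.some.inj this)

lemma open_cray_notMem (htree : IsOrderTree T) (t : T) :
    IsOpen {x : ℕ → Bool | ∀ n, ¬ t ≤ φ (seg x n)} := by
  rw [isOpen_iff_mem_nhds]
  intro x hx
  have key : ∃ N, ∀ y : ℕ → Bool, (∀ i < N, y i = x i) → ∀ n, ¬ t ≤ φ (seg y n) := by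
    by_contra hcon
    push_neg at hcon
    have hcon' : ∀ N, ∃ y n, N ≤ n ∧ (∀ i < N, y i = x i) ∧ t ≤ φ (seg y n) := by
      intro N
      obtain ⟨y, hy, n, hn⟩ := hcon N
      refine ⟨y, n, ?_, hy, hn⟩
      by_contra hlt
      push_neg at hlt
      have : seg y n = seg x n := seg_congr fun i hi => hy i (hi.trans hlt)
      exact hx n (this ▸ hn)
    have hstar : ∀ N, φ (seg x N) ≤ t := by
      intro N
      obtain ⟨y, n, hNn, hagree, hty⟩ := hcon' N
      have hz : t < φ (seg y (n+1)) :=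
        lt_of_le_of_lt hty (phi_seg_strict φ hφ y n.lt_succ_self)
      have hsegeq : seg x N = seg y N := seg_congr fun i hi => (hagree i hi).symm
      have hz2 : φ (seg x N) < φ (seg y (n+1)) := by
        rw [hsegeq]
        exact lt_of_le_of_lt (phi_seg_mono φ hφ y hNn) (phi_seg_strict φ hφ y n.lt_succ_self)
      have hne : t ≠ φ (seg x N) := fun h => hx N h.le
      rcases (htree (φ (seg y (n+1)))).2 hz hz2 hne with h | h
      · exact absurd h (hx N)
      · exact h
    obtain ⟨y, m, -, -, hty⟩ := hcon' 0
    have : φ (seg x m) ≤ φ (seg y m) := (hstar m).trans hty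
    have heq : seg x m = seg y m := ((hφ _ _).mpr this).eq_of_length (by simp [seg_length])
    exact hx m (heq ▸ hty)
  obtain ⟨N, hN⟩ := key
  have hopen : IsOpen {y : ℕ → Bool | ∀ i : Fin N, y i = x i} := by
    have : {y : ℕ → Bool | ∀ i : Fin N, y i = x i} =
        ⋂ i : Fin N, (fun y : ℕ → Bool => y i) ⁻¹' {x i} := by
      ext y; simp [Set.mem_iInter]
    rw [this]
    exact isOpen_iInter_of_finite fun i =>
      (continuous_apply (i : ℕ)).isOpen_preimage _ (isOpen_discrete _)
  exact Filter.mem_of_superset (hopen.mem_nhds fun i => rfl)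
    (fun y hy => hN y (fun i hi => hy ⟨i, hi⟩))

lemma exists_cantor_embed (htree : IsOrderTree T) :
    ∃ f : (ℕ → Bool) → RaySpace T, Topology.IsEmbedding f := by
  haveI : T2Space (RaySpace T) := rayspace_t2
  set f : (ℕ → Bool) → RaySpace T :=
    fun x => ⟨{u : T | ∃ n, u ≤ φ (seg x n)}, isRay_cray φ hφ htree x⟩ with hf
  have hinj : Function.Injective f := by
    intro x y h
    by_contra hxy
    exact cray_inj φ hφ hxy (congrArg Subtype.val h)
  have hcont : Continuous f := by
    rw [continuous_generateFrom_iff]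
    rintro s ⟨t, rfl | rfl⟩
    · exact open_cray_mem φ t
    · have : f ⁻¹' {R : RaySpace T | t ∉ R.val} = {x : ℕ → Bool | ∀ n, ¬ t ≤ φ (seg x n)} := by
        ext x
        show t ∉ {u : T | ∃ n, u ≤ φ (seg x n)} ↔ _
        simp
      rw [this]
      exact open_cray_notMem φ hφ htree t
  exact ⟨f, (hcont.isClosedEmbedding hinj).toIsEmbedding⟩

end CantorEmbed

section BinaryTree
variable {T : Type*} [PartialOrder T]

lemma branching (htree : IsOrderTree T) (S : Set (RaySpace T))
    (hni : ∀ x ∈ S, ∀ U : Set (RaySpace T), IsOpen U → U ∩ S ≠ {x})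
    {R : RaySpace T} (hR : R ∈ S) {t : T} (ht : t ∈ R.val) :
    ∃ p₀ p₁ : T, (t < p₀ ∧ ∃ R₀ ∈ S, p₀ ∈ R₀.val) ∧ (t < p₁ ∧ ∃ R₁ ∈ S, p₁ ∈ R₁.val) ∧
      ¬ p₀ ≤ p₁ ∧ ¬ p₁ ≤ p₀ := by
  by_contra hcon
  push_neg at hcon
  have hcmp : ∀ c ∈ {c : T | t ≤ c ∧ ∃ R' ∈ S, c ∈ R'.val},
      ∀ c' ∈ {c : T | t ≤ c ∧ ∃ R' ∈ S, c ∈ R'.val}, c ≤ c' ∨ c' ≤ c := by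
    rintro c ⟨htc, hcw⟩ c' ⟨htc', hcw'⟩
    rcases eq_or_lt_of_le htc with rfl | htc
    · exact Or.inl htc'
    rcases eq_or_lt_of_le htc' with rfl | htc'
    · exact Or.inr htc.le
    by_cases hle : c ≤ c'
    · exact Or.inl hle
    · exact Or.inr (hcon c c' ⟨htc, hcw⟩ ⟨htc', hcw'⟩ hle)
  set C : Set T := {c : T | t ≤ c ∧ ∃ R' ∈ S, c ∈ R'.val} with hC
  set N : Set T := {c ∈ C | ∃ R' ∈ S, t ∈ R'.val ∧ c ∉ R'.val} with hN
  by_cases hNe : N.Nonempty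
  · obtain ⟨c₁, hc₁⟩ := hNe
    have hmin : ∃ c₀ ∈ N, ∀ c ∈ N, ¬ c < c₀ := by
      by_cases h : ∃ c ∈ N, c < c₁
      · have hwf : (N ∩ Set.Iio c₁).IsWF := (htree c₁).1.mono Set.inter_subset_right
        have hne : (N ∩ Set.Iio c₁).Nonempty := by
          obtain ⟨c, hcN, hlt⟩ := h; exact ⟨c, hcN, hlt⟩
        refine ⟨hwf.min hne, (hwf.min_mem hne).1, ?_⟩
        intro c hcN hlt
        have hlt1 : c < c₁ := hlt.trans (hwf.min_mem hne).2
        exact hwf.not_lt_min hne ⟨hcN, hlt1⟩ hlt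
      · push_neg at h
        exact ⟨c₁, hc₁, fun c hc => h c hc⟩
    obtain ⟨c₀, hc₀N, hc₀min⟩ := hmin
    obtain ⟨⟨htc₀, hc₀w⟩, R₀, hR₀S, htR₀, hc₀R₀⟩ := hc₀N
    have hkey : ∀ R' ∈ S, t ∈ R'.val → c₀ ∉ R'.val →
        R'.val = {u : T | u ≤ t ∨ (t ≤ u ∧ u ∈ C ∧ ¬ c₀ ≤ u)} := by
      intro R' hR'S htR' hc₀R'
      ext u
      constructor
      · intro hu
        rcases ray_comp R' hu htR' with h | h
        · exact Or.inl h
        · exact Or.inr ⟨h, ⟨h, R', hR'S, hu⟩, fun hle => hc₀R' (R'.2.2.2.1 u hu c₀ hle)⟩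
      · rintro (h | ⟨htu, huC, hnc⟩)
        · exact R'.2.2.2.1 t htR' u h
        · have hcc : u ≤ c₀ := by
            rcases hcmp u huC c₀ ⟨htc₀, hc₀w⟩ with h | h
            · exact h
            · exact absurd h hnc
          have hult : u < c₀ := lt_of_le_of_ne hcc (fun h => hnc (h ▸ le_rfl))
          have huN : u ∉ N := fun huN => hc₀min u huN hult
          rw [hN] at huN
          simp only [Set.mem_setOf_eq, not_and, not_exists] at huN
          have := huN huC
          push_neg at this
          exact this R' hR'S htR'
    have hU : IsOpen ({x : RaySpace T | t ∈ x.val} ∩ {x : RaySpace T | c₀ ∉ x.val}) :=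
      (isOpen_memSet t).inter (isOpen_notMemSet c₀)
    refine hni R₀ hR₀S _ hU ?_
    apply Set.eq_singleton_iff_unique_mem.mpr
    refine ⟨⟨⟨htR₀, hc₀R₀⟩, hR₀S⟩, ?_⟩
    rintro x ⟨⟨htx, hc₀x⟩, hxS⟩
    apply Subtype.ext
    rw [hkey x hxS htx hc₀x, hkey R₀ hR₀S htR₀ hc₀R₀]
  · have hsub : ∀ R₁ ∈ S, t ∈ R₁.val → ∀ R₂ ∈ S, t ∈ R₂.val → R₁.val ⊆ R₂.val := by
      intro R₁ hR₁ ht₁ R₂ hR₂ ht₂ u hu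
      rcases ray_comp R₁ hu ht₁ with h | h
      · exact R₂.2.2.2.1 t ht₂ u h
      · have huC : u ∈ C := ⟨h, R₁, hR₁, hu⟩
        by_contra hu₂
        exact hNe ⟨u, huC, R₂, hR₂, ht₂, hu₂⟩
    refine hni R hR _ (isOpen_memSet t) ?_
    apply Set.eq_singleton_iff_unique_mem.mpr
    refine ⟨⟨ht, hR⟩, ?_⟩
    rintro x ⟨htx, hxS⟩
    exact Subtype.ext (Set.Subset.antisymm (hsub x hxS htx R hR ht) (hsub R hR ht x hxS htx))

/-- suffix trichotomy for lists -/
lemma suffix_tri (s : List Bool) : ∀ u : List Bool, s <:+ u ∨ u <:+ s ∨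
    ∃ (c : List Bool) (b b' : Bool), b ≠ b' ∧ (b :: c) <:+ s ∧ (b' :: c) <:+ u := by
  induction s with
  | nil => intro u; exact Or.inl List.nil_suffix
  | cons a s₂ ih =>
    intro u
    rcases ih u with h | h | ⟨c, b, b', hbb, hbs, hbu⟩
    · obtain ⟨w, rfl⟩ := h
      rcases List.eq_nil_or_concat w with rfl | ⟨v, x, rfl⟩
      · exact Or.inr (Or.inl (List.suffix_cons a s₂))
      · by_cases hx : x = a
        · subst hx
          exact Or.inl ⟨v, by simp⟩
        · exact Or.inr (Or.inr ⟨s₂, a, x, fun h => hx h.symm,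
            List.suffix_refl _, ⟨v, by simp⟩⟩)
    · exact Or.inr (Or.inl (h.trans (List.suffix_cons a s₂)))
    · exact Or.inr (Or.inr ⟨c, b, b', hbb, hbs.trans (List.suffix_cons a s₂), hbu⟩)

lemma exists_binary_tree (htree : IsOrderTree T) (S : Set (RaySpace T)) (hSne : S.Nonempty)
    (hni : ∀ x ∈ S, ∀ U : Set (RaySpace T), IsOpen U → U ∩ S ≠ {x}) :
    ∃ φ : List Bool → T, ∀ s t : List Bool, s <+: t ↔ φ s ≤ φ t := by
  set α := {p : T // ∃ R' ∈ S, p ∈ R'.val} with hα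
  have key : ∀ a : α, ∃ q : Bool → α, (∀ b, a.1 < (q b).1) ∧
      ¬ (q false).1 ≤ (q true).1 ∧ ¬ (q true).1 ≤ (q false).1 := by
    rintro ⟨p, R', hR'S, hp⟩
    obtain ⟨p₀, p₁, ⟨h0l, h0e⟩, ⟨h1l, h1e⟩, hi0, hi1⟩ := branching htree S hni hR'S hp
    refine ⟨fun b => if b then ⟨p₁, h1e⟩ else ⟨p₀, h0e⟩, ?_, by simpa using hi0, by simpa using hi1⟩
    intro b; cases b <;> simpa
  choose q hq1 hq2 hq3 using key
  obtain ⟨R, hRS⟩ := hSne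
  obtain ⟨t₀, ht₀⟩ := R.2.1
  let a0 : α := ⟨t₀, R, hRS, ht₀⟩
  let ν : List Bool → α := fun l => l.rec a0 (fun b _ ih => q ih b)
  have νcons : ∀ (b : Bool) (s : List Bool), ν (b :: s) = q (ν s) b := fun b s => rfl
  have mono : ∀ u s : List Bool, s <:+ u → (ν s).1 ≤ (ν u).1 := by
    intro u
    induction u with
    | nil => intro s hs; rw [List.suffix_nil.mp hs]
    | cons b u₂ ih =>
      intro s hs
      rcases List.suffix_cons_iff.mp hs with rfl | hs
      · exact le_rfl
      · exact (ih s hs).trans (le_of_lt (by rw [νcons]; exact hq1 (ν u₂) b))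
  have strict : ∀ u s : List Bool, s <:+ u → s ≠ u → (ν s).1 < (ν u).1 := by
    intro u s hs hne
    cases u with
    | nil => exact absurd (List.suffix_nil.mp hs) hne
    | cons b u₂ =>
      rcases List.suffix_cons_iff.mp hs with rfl | hs
      · exact absurd rfl hne
      · exact lt_of_le_of_lt (mono u₂ s hs) (by rw [νcons]; exact hq1 (ν u₂) b)
  have hinc : ∀ (c : List Bool) (b b' : Bool), b ≠ b' → ¬ (ν (b :: c)).1 ≤ (ν (b' :: c)).1 := by
    intro c b b' hbb
    rw [νcons, νcons]
    cases b <;> cases b' <;> simp at hbb ⊢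
    · exact hq2 (ν c)
    · exact hq3 (ν c)
  have main : ∀ u s : List Bool, (ν s).1 ≤ (ν u).1 → s <:+ u := by
    intro u s hle
    rcases suffix_tri s u with h | h | ⟨c, b, b', hbb, hbs, hbu⟩
    · exact h
    · rcases eq_or_ne u s with rfl | hne
      · exact List.suffix_refl u
      · exact absurd (lt_of_le_of_lt hle (strict s u h hne)) (lt_irrefl _)
    · exfalso
      have hz : (ν u).1 < (ν (true :: u)).1 := by rw [νcons]; exact hq1 (ν u) true
      have h1 : (ν (b :: c)).1 < (ν (true :: u)).1 :=
        lt_of_le_of_lt ((mono s _ hbs).trans hle) hz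
      have h2 : (ν (b' :: c)).1 < (ν (true :: u)).1 :=
        lt_of_le_of_lt (mono u _ hbu) hz
      have hne : (ν (b :: c)).1 ≠ (ν (b' :: c)).1 := fun h =>
        hinc c b b' hbb h.le
      rcases (htree _).2 h1 h2 hne with h | h
      · exact hinc c b b' hbb h
      · exact hinc c b' b (fun h' => hbb h'.symm) h
  refine ⟨fun s => (ν s.reverse).1, fun s u => ?_⟩
  constructor
  · intro h
    exact mono u.reverse s.reverse (List.reverse_suffix.mpr h)
  · intro h
    have := main u.reverse s.reverse h
    rwa [List.reverse_suffix] at this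

end BinaryTree

/-- For a rooted tree `T`, the following are equivalent: (a) `R(T)` is scattered;
(b) `R(T)` contains no topological copy of the Cantor space `2^ω`;
(c) `T` has no subset order-isomorphic to the binary tree `2^{<ω}`. -/
theorem rayspace_scattered_tfae {T : Type*} [PartialOrder T]
    (htree : IsOrderTree T) (r : T) (hroot : ∀ t : T, r ≤ t) :
    List.TFAE
      [∀ S : Set (RaySpace T), S.Nonempty →
          ∃ x ∈ S, ∃ U : Set (RaySpace T), IsOpen U ∧ U ∩ S = {x},
        ¬ ∃ f : (ℕ → Bool) → RaySpace T, Topology.IsEmbedding f,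
        ¬ ∃ φ : List Bool → T, ∀ s t : List Bool, s <+: t ↔ φ s ≤ φ t] := by
  tfae_have 1 → 2 := by
    intro h1
    rintro ⟨f, hf⟩
    obtain ⟨x, hxS, U, hU, hUS⟩ := h1 (Set.range f) ⟨f (fun _ => false), Set.mem_range_self _⟩
    obtain ⟨c, rfl⟩ := hxS
    have hopen : IsOpen (f ⁻¹' U) := hU.preimage hf.continuous
    have hsingle : f ⁻¹' U = {c} := by
      ext y
      constructor
      · intro hy
        have hmem : f y ∈ U ∩ Set.range f := ⟨hy, Set.mem_range_self _⟩
        rw [hUS] at hmem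
        have : f y = f c := hmem
        exact hf.injective this
      · intro hy
        have hy' : y = c := hy
        subst hy'
        have : f y ∈ U ∩ Set.range f := by rw [hUS]; rfl
        exact this.1
    rw [hsingle] at hopen
    obtain ⟨I, u, hIu, hpi⟩ := isOpen_pi_iff.mp hopen c rfl
    obtain ⟨n, hn⟩ := I.exists_notMem
    have hmem : Function.update c n (!c n) ∈ (↑I : Set ℕ).pi u := by
      intro i hi
      have hne : i ≠ n := fun h => hn (h ▸ hi)
      rw [Function.update_of_ne hne]
      exact (hIu i hi).2
    have heq : Function.update c n (!c n) = c := hpi hmem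
    have := congrFun heq n
    simp at this
  tfae_have 2 → 3 := by
    intro h2
    rintro ⟨φ, hφ⟩
    exact h2 (exists_cantor_embed φ hφ htree)
  tfae_have 3 → 1 := by
    intro h3
    by_contra h1
    push_neg at h1
    obtain ⟨S, hSne, hni⟩ := h1
    exact h3 (exists_binary_tree htree S hSne hni)
  tfae_finish
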